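/- Let G be an infinite discrete group. Then the Bernoulli flow 2^G is disjoint from every minimal, proximal G-flow; consequently, every minimal proximal G-flow has the separated covering property. -/

import Mathlib

open Pointwise

section Defs

variable (G : Type*) [Group G]

/-- The right-shift of `G` on `G → A`: `(g • z) h = z (h * g)`. -/
instance (priority := high) shiftSMul (A : Type*) : SMul G (G → A) :=
  ⟨fun g z h => z (h * g)⟩

/-- The right-shift action of `G` on `G → A` is a `G`-action (the Bernoulli flow when
`A = Bool`). -/
instance shiftMulAction (A : Type*) : MulAction G (G → A) where
  one_smul z := funext fun h => by show z (h * 1) = z h; rw [mul_one]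
  mul_smul g₁ g₂ z := funext fun h => by
    show z (h * (g₁ * g₂)) = z (h * g₁ * g₂)
    rw [mul_assoc]

/-- `S ⊆ G` is `D`-separated if `Dg ∩ Dh = ∅` for all distinct `g, h ∈ S`. -/
def DSeparated (D S : Set G) : Prop :=
  ∀ g ∈ S, ∀ h ∈ S, g ≠ h → Disjoint (D * ({g} : Set G)) (D * ({h} : Set G))

/-- The separated covering property for a `G`-flow `X`: for every finite `D ⊆ G`
and every nonempty open `U ⊆ X` there is a `D`-separated `S ⊆ G` with `S⁻¹U = X`. -/
def SCP (X : Type*) [TopologicalSpace X] [MulAction G X] : Prop :=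
  ∀ D : Set G, D.Finite → ∀ U : Set X, IsOpen U → U.Nonempty →
    ∃ S : Set G, DSeparated G D S ∧ ∀ x : X, ∃ s ∈ S, s • x ∈ U

/-- A `G`-flow is minimal if every orbit is dense. -/
def IsMinimalFlow (X : Type*) [TopologicalSpace X] [MulAction G X] : Prop :=
  ∀ x : X, Dense (MulAction.orbit G x)

/-- Two `G`-flows `X` and `Y` are disjoint if the only closed `G`-invariant subset of
`X × Y` projecting onto both factors is `X × Y` itself. -/
def FlowsDisjoint (X Y : Type*) [TopologicalSpace X] [TopologicalSpace Y]
    [MulAction G X] [MulAction G Y] : Prop :=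
  ∀ J : Set (X × Y), IsClosed J → (∀ (g : G), ∀ p ∈ J, g • p ∈ J) →
    Prod.fst '' J = Set.univ → Prod.snd '' J = Set.univ → J = Set.univ

end Defs

/-- A `G`-flow is proximal if any two points can be simultaneously pushed to a single
point: `(y, y)` lies in the closure of `{(g • x₁, g • x₂) : g ∈ G}` for some `y`. -/
def IsProximalFlow (G : Type*) [Group G] (X : Type*) [TopologicalSpace X]
    [MulAction G X] : Prop :=
  ∀ x₁ x₂ : X, ∃ y : X, (y, y) ∈ closure (Set.range fun g : G => (g • x₁, g • x₂))

section Aux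

open Filter Set

set_option linter.unusedSectionVars false

variable {G : Type*} [Group G]
variable {X : Type*} [TopologicalSpace X] [CompactSpace X] [T2Space X] [Nonempty X]
  [MulAction G X] [ContinuousConstSMul G X]

/-- Proximality in ultrafilter form: some ultrafilter collapses a given pair. -/
theorem aux_prox_ultra (hXprox : IsProximalFlow G X) (x₁ x₂ : X) :
    ∃ (q : Ultrafilter G) (z : X),
      Tendsto (fun g : G => g • x₁) q (nhds z) ∧ Tendsto (fun g : G => g • x₂) q (nhds z) := by
  obtain ⟨y, hy⟩ := hXprox x₁ x₂
  set F : G → X × X := fun g => (g • x₁, g • x₂) with hF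
  rcases mem_closure_iff_ultrafilter.mp hy with ⟨u, hru, hu⟩
  have hne : (Filter.comap F (u : Filter (X × X))).NeBot := by
    refine Filter.comap_neBot fun t ht => ?_
    have : t ∩ Set.range F ∈ u := Filter.inter_mem ht hru
    rcases u.nonempty_of_mem this with ⟨v, hv1, g, hgv⟩
    exact ⟨g, by rwa [hgv]⟩
  set q : Ultrafilter G := @Ultrafilter.of G (Filter.comap F u) hne
  have hle : Filter.map F (q : Filter G) ≤ u :=
    le_trans (Filter.map_mono (Ultrafilter.of_le _)) (Filter.map_comap_le)
  have hFt : Tendsto F (q : Filter G) (nhds (y, y)) := le_trans hle hu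
  exact ⟨q, y, (continuous_fst.tendsto (y, y)).comp hFt,
    (continuous_snd.tendsto (y, y)).comp hFt⟩

/-- Composition of ultrafilter limits of the action. -/
theorem aux_comp_tendsto (p q : Ultrafilter G) (x w z : X)
    (hp : Tendsto (fun g : G => g • x) p (nhds w))
    (hq : Tendsto (fun h : G => h • w) q (nhds z)) :
    Tendsto (fun u : G => u • x) (q.bind fun h => p.map (fun g => h * g)) (nhds z) := by
  intro V hV
  rcases mem_nhds_iff.mp hV with ⟨V', hV'sub, hV'open, hzV'⟩
  have hA : {h : G | h • w ∈ V'} ∈ q := hq (hV'open.mem_nhds hzV')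
  have : {h : G | (fun u : G => u • x) ⁻¹' V ∈ (p.map fun g => h * g)} ∈ q := by
    refine q.toFilter.sets_of_superset hA ?_
    intro h hh
    simp only [Ultrafilter.mem_map, mem_setOf_eq]
    have hcont : Continuous fun y : X => h • y := continuous_const_smul h
    have : {g : G | (g • x) ∈ (fun y : X => h • y) ⁻¹' V'} ∈ p :=
      hp ((hV'open.preimage hcont).mem_nhds hh)
    refine p.toFilter.sets_of_superset this ?_
    intro g hg
    simp only [mem_preimage, mem_setOf_eq] at hg ⊢
    rw [mul_smul h g x]
    exact hV'sub hg
  exact this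

/-- In a proximal flow, every finite set of points can be simultaneously collapsed
along some ultrafilter. -/
theorem aux_collapse (hXprox : IsProximalFlow G X) (F : Finset X) :
    ∃ (p : Ultrafilter G) (y : X), ∀ x ∈ F, Tendsto (fun g : G => g • x) p (nhds y) := by
  classical
  induction F using Finset.induction_on with
  | empty => exact ⟨(pure 1 : Ultrafilter G), Classical.arbitrary X, by simp⟩
  | @insert x₀ F hx₀ ih =>
      obtain ⟨p, y, hy⟩ := ih
      obtain ⟨y', hy'⟩ := (isCompact_univ (X := X)).ultrafilter_le_nhds
        (p.map fun g => g • x₀) (by simp)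
      have hp' : Tendsto (fun g : G => g • x₀) p (nhds y') := hy'.2
      obtain ⟨q, z, hq1, hq2⟩ := aux_prox_ultra hXprox y y'
      refine ⟨q.bind fun h => p.map (fun g => h * g), z, ?_⟩
      intro x hx
      rcases Finset.mem_insert.mp hx with rfl | hxF
      · exact aux_comp_tendsto p q x y' z hp' hq2
      · exact aux_comp_tendsto p q x y z (hy x hxF) hq1

/-- In a minimal proximal flow, any finite set of points can be pushed into any
nonempty open set by a single group element. -/
theorem aux_push (hXmin : IsMinimalFlow G X) (hXprox : IsProximalFlow G X)
    (F : Finset X) (U : Set X) (hU : IsOpen U) (hUne : U.Nonempty) :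
    ∃ g : G, ∀ x ∈ F, g • x ∈ U := by
  classical
  obtain ⟨p, y, hy⟩ := aux_collapse hXprox F
  obtain ⟨u, hmem, huU⟩ := (hXmin y).exists_mem_open hU hUne
  obtain ⟨h, rfl⟩ := hmem
  have key : ∀ x ∈ F, {g : G | (h * g) • x ∈ U} ∈ p := by
    intro x hx
    have hcont : Continuous fun w : X => h • w := continuous_const_smul h
    have : {g : G | (g • x) ∈ (fun w : X => h • w) ⁻¹' U} ∈ p :=
      hy x hx ((hU.preimage hcont).mem_nhds (by simpa using huU))
    refine p.toFilter.sets_of_superset this ?_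
    intro g hg; simpa [mul_smul] using hg
  have : (⋂ x ∈ F, {g : G | (h * g) • x ∈ U}) ∈ p :=
    (Filter.biInter_finset_mem F).mpr key
  rcases p.nonempty_of_mem this with ⟨g, hg⟩
  simp only [Set.mem_iInter, mem_setOf_eq] at hg
  exact ⟨h * g, hg⟩

end Aux

/-- Any group can be colored with finitely many colors so that distinct elements
`g, h` with `g * h⁻¹` in a fixed finite symmetric set `K` get different colors. -/
theorem aux_coloring {G : Type*} [Group G] (K : Set G) (hK : K.Finite)
    (hsymm : ∀ k ∈ K, k⁻¹ ∈ K) :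
    ∃ (n : ℕ) (c : G → Fin (n + 1)), ∀ g h : G, g ≠ h → g * h⁻¹ ∈ K → c g ≠ c h := by
  classical
  set n := hK.toFinset.card with hn
  refine ⟨n, ?_⟩
  have finpart : ∀ S : Finset G, ∃ c : G → Fin (n + 1),
      ∀ g ∈ S, ∀ h ∈ S, g ≠ h → g * h⁻¹ ∈ K → c g ≠ c h := by
    intro S
    induction S using Finset.induction_on with
    | empty => exact ⟨fun _ => 0, by simp⟩
    | @insert a S ha ih =>
        obtain ⟨c, hc⟩ := ih
        set N : Finset G := S.filter (fun h => a * h⁻¹ ∈ K) with hN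
        have hcard : (N.image c).card < n + 1 := by
          have h1 : (N.image c).card ≤ N.card := Finset.card_image_le
          have h2 : N.card ≤ n := by
            rw [hn]
            refine Finset.card_le_card_of_injOn (fun h => a * h⁻¹) ?_ ?_
            · intro h hh
              simp only [hN, Finset.mem_coe, Finset.mem_filter] at hh
              simpa using hh.2
            · intro h₁ _ h₂ _ e
              exact inv_injective (mul_left_cancel e)
          omega
        obtain ⟨v, hv⟩ : ∃ v : Fin (n + 1), v ∉ N.image c := by
          by_contra hcon
          push_neg at hcon
          have : (Finset.univ : Finset (Fin (n + 1))) ⊆ N.image c := fun v _ => hcon v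
          have := Finset.card_le_card this
          simp at this
          omega
        refine ⟨Function.update c a v, ?_⟩
        intro g hg h hh hne hK'
        rcases Finset.mem_insert.mp hg with rfl | hgS <;>
          rcases Finset.mem_insert.mp hh with rfl | hhS
        · exact absurd rfl hne
        · have hha : h ≠ g := fun e => hne e.symm
          rw [Function.update_self, Function.update_of_ne hha]
          intro e
          apply hv
          rw [e]
          exact Finset.mem_image_of_mem c (by simp [hN, hhS, hK'])
        · have hga : g ≠ h := hne
          rw [Function.update_of_ne hga, Function.update_self]
          intro e
          apply hv
          rw [← e]
          refine Finset.mem_image_of_mem c ?_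
          have hsy : h * g⁻¹ ∈ K := by
            have := hsymm _ hK'
            simpa using this
          simp [hN, hgS, hsy]
        · have hga : g ≠ a := fun e => ha (e ▸ hgS)
          have hha : h ≠ a := fun e => ha (e ▸ hhS)
          rw [Function.update_of_ne hga, Function.update_of_ne hha]
          exact hc g hgS h hhS hne hK'
  let C : Finset G → Set (G → Fin (n + 1)) :=
    fun S => {c | ∀ g ∈ S, ∀ h ∈ S, g ≠ h → g * h⁻¹ ∈ K → c g ≠ c h}
  have hdir : Directed (· ⊇ ·) C := by
    intro S T
    refine ⟨S ∪ T, ?_, ?_⟩ <;>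
      · intro c hc g hg h hh
        exact hc g (Finset.mem_union.mpr (by tauto)) h (Finset.mem_union.mpr (by tauto))
  have hclosed : ∀ S, IsClosed (C S) := by
    intro S
    have : C S = ⋂ g ∈ S, ⋂ h ∈ S, {c : G → Fin (n+1) | g ≠ h → g * h⁻¹ ∈ K → c g ≠ c h} := by
      ext c; simp [C, Set.mem_iInter]
    rw [this]
    refine isClosed_biInter fun g _ => isClosed_biInter fun h _ => ?_
    by_cases h1 : g ≠ h
    · by_cases h2 : g * h⁻¹ ∈ K
      · have : {c : G → Fin (n+1) | g ≠ h → g * h⁻¹ ∈ K → c g ≠ c h}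
            = (fun c : G → Fin (n+1) => (c g, c h)) ⁻¹' {p | p.1 ≠ p.2} := by
          ext c; simp [h1, h2]
        rw [this]
        exact (isClosed_discrete _).preimage (by continuity)
      · convert isClosed_univ using 1
        ext c; simp [h2]
    · convert isClosed_univ using 1
      ext c; simp; tauto
  have hne : ∀ S, (C S).Nonempty := fun S => finpart S
  obtain ⟨c, hc⟩ := IsCompact.nonempty_iInter_of_directed_nonempty_isCompact_isClosed C hdir hne
    (fun S => (hclosed S).isCompact) hclosed
  refine ⟨c, fun g h hne' hK' => ?_⟩
  exact Set.mem_iInter.mp hc {g, h} g (by simp) h (by simp) hne' hK'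

/-- Every minimal proximal flow has the separated covering property. -/
theorem aux_scp (G : Type*) [Group G]
    (X : Type*) [TopologicalSpace X] [CompactSpace X] [T2Space X] [Nonempty X]
    [MulAction G X] [ContinuousConstSMul G X]
    (hXmin : IsMinimalFlow G X) (hXprox : IsProximalFlow G X) : SCP G X := by
  classical
  intro D hD U hU hUne
  set K : Set G := D⁻¹ * D with hK
  have hKfin : K.Finite := hD.inv.mul hD
  have hsymm : ∀ k ∈ K, k⁻¹ ∈ K := by
    rintro k hk
    rw [hK, Set.mem_mul] at hk ⊢
    obtain ⟨a, ha, b, hb, rfl⟩ := hk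
    refine ⟨b⁻¹, by simpa using hb, a⁻¹, by simpa using ha, by group⟩
  obtain ⟨n, c, hcol⟩ := aux_coloring K hKfin hsymm
  have main : ∃ i : Fin (n + 1), ∀ x : X, ∃ s : G, c s = i ∧ s • x ∈ U := by
    by_contra hcon
    push_neg at hcon
    choose xi hxi using hcon
    obtain ⟨g, hg⟩ := aux_push hXmin hXprox (Finset.univ.image xi) U hU hUne
    exact hxi (c g) g rfl (hg (xi (c g)) (Finset.mem_image_of_mem xi (Finset.mem_univ _)))
  obtain ⟨i, hi⟩ := main
  refine ⟨{s : G | c s = i}, ?_, fun x => by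
    obtain ⟨s, hs1, hs2⟩ := hi x; exact ⟨s, hs1, hs2⟩⟩
  intro g hg h hh hne
  rw [Set.disjoint_left]
  intro a hag hah
  rw [Set.mem_mul] at hag hah
  obtain ⟨d, hd, g', hg', ha1⟩ := hag
  obtain ⟨d', hd', h', hh', ha2⟩ := hah
  rw [Set.mem_singleton_iff] at hg' hh'
  subst hg'; subst hh'
  have heq : d * g' = d' * h' := by rw [ha1, ha2]
  have hKmem : g' * h'⁻¹ ∈ K := by
    rw [hK, Set.mem_mul]
    refine ⟨d⁻¹, by simpa using hd, d', hd', ?_⟩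
    have h2 : d' = d * g' * h'⁻¹ := by rw [heq]; group
    rw [h2]; group
  exact hcol g' h' hne hKmem (hg.trans hh.symm)

/-- The Bernoulli flow `2^G` is disjoint from every minimal, proximal
`G`-flow; consequently, every minimal proximal `G`-flow has the separated covering
property. -/
theorem bernoulli_disjoint_from_minimal_proximal_and_SCP
    (G : Type*) [Group G] [Infinite G]
    (X : Type*) [TopologicalSpace X] [CompactSpace X] [T2Space X] [Nonempty X]
    [MulAction G X] [ContinuousConstSMul G X]
    (hXmin : IsMinimalFlow G X) (hXprox : IsProximalFlow G X) :
    FlowsDisjoint G X (G → Bool) ∧ SCP G X := by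
  classical
  have hSCP : SCP G X := aux_scp G X hXmin hXprox
  refine ⟨?_, hSCP⟩
  intro J hJcl hJinv hπ1 hπ2
  rw [Set.eq_univ_iff_forall]
  rintro ⟨x, z⟩
  rw [← hJcl.closure_eq]
  rw [mem_closure_iff]
  intro O hO hxzO
  -- product neighborhood
  obtain ⟨U, hU, V, hV, hUV⟩ := mem_nhds_prod_iff.mp (hO.mem_nhds hxzO)
  obtain ⟨U', hU'sub, hU'open, hxU'⟩ := mem_nhds_iff.mp hU
  -- cylinder inside V
  rw [nhds_pi, Filter.mem_pi'] at hV
  obtain ⟨I, t, ht, htV⟩ := hV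
  have hcyl : {w : G → Bool | ∀ d ∈ I, w d = z d} ⊆ V := by
    intro w hw
    refine htV fun d hd => ?_
    rw [hw d hd]
    exact mem_of_mem_nhds (ht d)
  -- apply SCP
  obtain ⟨S, hsep, hcov⟩ := hSCP (↑I) (I.finite_toSet) U' hU'open ⟨x, hxU'⟩
  -- the point ζ : pattern of z repeated along the blocks I * s, s ∈ S
  set P : G → Prop := fun a => ∃ p : G × G, p.1 ∈ S ∧ p.2 ∈ I ∧ p.2 * p.1 = a with hP
  set ζ : G → Bool := fun a => if h : P a then (h.choose.2 |> z) else false with hζ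
  have hζval : ∀ s ∈ S, ∀ d ∈ I, ζ (d * s) = z d := by
    intro s hs d hd
    have hex : P (d * s) := ⟨(s, d), hs, hd, rfl⟩
    have hch := hex.choose_spec
    obtain ⟨h1, h2, h3⟩ := hch
    have hss : hex.choose.1 = s := by
      by_contra hne
      have hdisj := hsep hex.choose.1 h1 s hs hne
      rw [Set.disjoint_left] at hdisj
      exact hdisj (a := d * s)
        ⟨hex.choose.2, h2, hex.choose.1, Set.mem_singleton _, h3⟩
        ⟨d, hd, s, Set.mem_singleton _, rfl⟩
    have hdd : hex.choose.2 = d := by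
      have := h3
      rw [hss] at this
      exact mul_right_cancel this
    simp only [hζ]
    rw [dif_pos hex, hdd]
  -- pick a J-partner of ζ
  have hζmem : ζ ∈ Prod.snd '' J := by rw [hπ2]; trivial
  obtain ⟨⟨x'', ζ'⟩, hJx, hsnd⟩ := hζmem
  have hζ' : ζ' = ζ := hsnd
  subst hζ'
  obtain ⟨s, hsS, hsx⟩ := hcov x''
  refine ⟨s • (x'', ζ), ?_, hJinv s _ hJx⟩
  refine hUV ?_
  constructor
  · exact hU'sub hsx
  · refine hcyl ?_
    intro d hd
    show ζ (d * s) = z d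
    exact hζval s hsS d hd
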